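/- Let X be a good I-colored directed graph with a maximum element x₀ and with the homogeneous local confluence property. Then the weight multiset wt(x) ∈ ℕ[I] is well-defined: for any x ∈ X and any two words (i₁,…,i_s), (j₁,…,j_t) ∈ I^* with f̃_{i₁}⋯f̃_{i_s} x₀ = x = f̃_{j₁}⋯f̃_{j_t} x₀, the multisets {i₁,…,i_s} and {j₁,…,j_t} coincide (in particular s = t). -/

import Mathlib

def iterOpt {X : Type*} (g : X → Option X) : ℕ → X → Option X
  | 0, x => some x
  | n+1, x => (g x).bind (iterOpt g n)

def chainOpt {X I : Type*} (g : I → X → Option X) (w : List I) (x : X) : Option X :=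
  w.foldr (fun i o => o.bind (g i)) (some x)

/-- A good I-colored directed graph: partial operators `e i`, `f i` that are mutually
inverse partial bijections, together with the (finite) string lengths `eps`, `phi`. -/
structure GoodGraph (I : Type*) (X : Type*) where
  e : I → X → Option X
  f : I → X → Option X
  eps : I → X → ℕ
  phi : I → X → ℕ
  ef : ∀ i x y, e i y = some x ↔ f i x = some y
  eps_ne : ∀ i x, iterOpt (e i) (eps i x) x ≠ none
  eps_top : ∀ i x, iterOpt (e i) (eps i x + 1) x = none
  phi_ne : ∀ i x, iterOpt (f i) (phi i x) x ≠ none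
  phi_top : ∀ i x, iterOpt (f i) (phi i x + 1) x = none

/-- Maximum element: no incoming arrows, and every element reachable from it. -/
def IsMaxElem {I X : Type*} (G : GoodGraph I X) (x0 : X) : Prop :=
  (∀ i, G.e i x0 = none) ∧ ∀ x, ∃ w : List I, chainOpt G.f w x0 = some x

/-- Homogeneous local confluence property. -/
def HLC {I X : Type*} (G : GoodGraph I X) : Prop :=
  ∀ (x : X) (i j : I), i ≠ j → G.e i x ≠ none → G.e j x ≠ none →
    ∃ (w w' : List I) (z : X), 2 ≤ w.length ∧
      (w : Multiset I) = (w' : Multiset I) ∧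
      w.getLast? = some i ∧ w'.getLast? = some j ∧
      chainOpt G.e w x = some z ∧ chainOpt G.e w' x = some z

def axS2 {I X : Type*} (A : I → I → ℤ) (G : GoodGraph I X) : Prop :=
  ∀ i j : I, i ≠ j → ∀ x y : X, G.e i x = some y →
    ((G.phi j y : ℤ) - G.phi j x) - ((G.eps j y : ℤ) - G.eps j x) = A j i

def axS3 {I X : Type*} (G : GoodGraph I X) : Prop :=
  ∀ i j : I, i ≠ j → ∀ x y : X, G.e i x = some y →
    G.phi j y ≤ G.phi j x ∧ G.eps j x ≤ G.eps j y

def axS4 {I X : Type*} (G : GoodGraph I X) : Prop :=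
  ∀ i j : I, i ≠ j → ∀ x xi xj : X, G.e i x = some xi → G.e j x = some xj →
    ((G.eps j xi = G.eps j x →
        ∃ z, G.e j xi = some z ∧ G.e i xj = some z ∧ G.phi i xi = G.phi i z) ∧
     (G.eps j xi = G.eps j x + 1 → G.eps i xj = G.eps i x + 1 →
        ∃ z zi zj, chainOpt G.e [i, j, j, i] x = some z ∧
          chainOpt G.e [j, i, i, j] x = some z ∧
          G.f i z = some zi ∧ G.f j z = some zj ∧
          G.phi j zi = G.phi j z + 1 ∧ G.phi i zj = G.phi i z + 1))

def axS5 {I X : Type*} (G : GoodGraph I X) : Prop :=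
  ∀ i j : I, i ≠ j → ∀ x xi xj : X, G.f i x = some xi → G.f j x = some xj →
    ((G.phi j xi = G.phi j x →
        ∃ z, G.f j xi = some z ∧ G.f i xj = some z ∧ G.eps i xi = G.eps i z) ∧
     (G.phi j xi = G.phi j x + 1 → G.phi i xj = G.phi i x + 1 →
        ∃ z zi zj, chainOpt G.f [i, j, j, i] x = some z ∧
          chainOpt G.f [j, i, i, j] x = some z ∧
          G.e i z = some zi ∧ G.e j z = some zj ∧
          G.eps j zi = G.eps j z + 1 ∧ G.eps i zj = G.eps i z + 1))

/-- `X` is `A`-regular. -/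
def ARegular {I X : Type*} (A : I → I → ℤ) (G : GoodGraph I X) : Prop :=
  axS2 A G ∧ axS3 G ∧ axS4 G ∧ axS5 G

/-- (S6), for the ordered pair (i,j) with a_{ij} = -2, a_{ji} = -1. -/
def axS6 {I X : Type*} (G : GoodGraph I X) (i j : I) : Prop :=
  ∀ x xi xj : X, G.e i x = some xi → G.e j x = some xj →
    G.eps j xi = G.eps j x + 1 → G.eps i xj = G.eps i x + 2 →
    ∃ y y', chainOpt G.e [i, i, j] x = some y ∧
      chainOpt G.e [i, i, j, j, i] x = some y' ∧
      ∀ fy fy', G.f i y = some fy → G.f i y' = some fy' →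
        (¬ (G.phi j fy = G.phi j y + 1 ∧ G.phi j fy' = G.phi j y')) ∧
        (G.phi j fy = G.phi j y + 1 → G.phi j fy' = G.phi j y' + 1 →
          ∃ t, G.e i y = some t ∧ G.f j y' = some t ∧ G.phi i t = G.phi i y' + 1) ∧
        (G.phi j fy = G.phi j y → G.phi j fy' = G.phi j y' + 1 →
          ∃ z zi zj, chainOpt G.e [j, i, i, i, j, j, i] x = some z ∧
            chainOpt G.e [i, j, j, i, i, i, j] x = some z ∧
            G.f i z = some zi ∧ G.f j z = some zj ∧
            G.phi j zi = G.phi j z + 1 ∧ G.phi i zj = G.phi i z + 2) ∧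
        (G.phi j fy = G.phi j y → G.phi j fy' = G.phi j y' →
          ∃ t, G.e i y = some t ∧ G.f j y' = some t ∧ G.phi i t = G.phi i y' + 2 ∧
            ∃ u v, chainOpt G.f [i, i] y' = some u ∧ G.f j u = some v ∧
              G.phi i v = G.phi i u)

/-- (S7). -/
def axS7 {I X : Type*} (G : GoodGraph I X) (i j : I) : Prop :=
  ∀ x xi xj : X, G.f i x = some xi → G.f j x = some xj →
    G.phi j xi = G.phi j x + 1 → G.phi i xj = G.phi i x + 2 →
    ∃ y y', chainOpt G.f [i, i, j] x = some y ∧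
      chainOpt G.f [i, i, j, j, i] x = some y' ∧
      ∀ ey ey', G.e i y = some ey → G.e i y' = some ey' →
        G.eps j ey = G.eps j y → G.eps j ey' = G.eps j y' + 1 →
        ∃ z, chainOpt G.f [j, i, i, i, j, j, i] x = some z ∧
          chainOpt G.f [i, j, j, i, i, i, j] x = some z

/-- (S8). -/
def axS8 {I X : Type*} (G : GoodGraph I X) (i j : I) : Prop :=
  ∀ x xi xj : X, G.f i x = some xi → G.f j x = some xj →
    G.phi j xi = G.phi j x + 1 → G.phi i xj = G.phi i x + 1 → 2 ≤ G.phi i x →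
    ∃ z, chainOpt G.f [i, j, j, i, i] x = some z ∧
      chainOpt G.f [j, i, i, i, j] x = some z

/-- (S9). -/
def axS9 {I X : Type*} (G : GoodGraph I X) (i j : I) : Prop :=
  ∀ x xi xj : X, G.f i x = some xi → G.f j x = some xj →
    G.phi j xi = G.phi j x → G.phi i xj = G.phi i x + 2 →
    ∀ v u, chainOpt G.f [i, i] x = some v → G.f j v = some u → G.phi i u = G.phi i v →
    ∃ z, chainOpt G.f [i, j, j, i, i] x = some z ∧
      chainOpt G.f [j, i, i, i, j] x = some z

def IsGCM {I : Type*} (A : I → I → ℤ) : Prop :=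
  (∀ i, A i i = 2) ∧ (∀ i j, i ≠ j → A i j ≤ 0) ∧ (∀ i j, A i j = 0 ↔ A j i = 0)

def IsSymmetrizable {I : Type*} (A : I → I → ℤ) : Prop :=
  ∃ d : I → ℤ, (∀ i, 0 < d i) ∧ ∀ i j, d i * A i j = d j * A j i

/-- Every 2×2 principal submatrix of `A` is `A₁⊕A₁`, `A₂`, `B₂` or `ᵗB₂`. -/
def Rank2OK {I : Type*} (A : I → I → ℤ) : Prop :=
  ∀ i j, i ≠ j →
    (A i j = 0 ∧ A j i = 0) ∨ (A i j = -1 ∧ A j i = -1) ∨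
    (A i j = -2 ∧ A j i = -1) ∨ (A i j = -1 ∧ A j i = -2)

/-- (S6)--(S9) hold for every ordered pair with `A|_{i,j} = B₂`. -/
def ExtraB2 {I X : Type*} (A : I → I → ℤ) (G : GoodGraph I X) : Prop :=
  ∀ i j, A i j = -2 → A j i = -1 →
    axS6 G i j ∧ axS7 G i j ∧ axS8 G i j ∧ axS9 G i j

section AuxStmt15

variable {X I : Type*}

lemma chainOpt_cons' (g : I → X → Option X) (i : I) (w : List I) (x : X) :
    chainOpt g (i :: w) x = (chainOpt g w x).bind (g i) := rfl

lemma chainOpt_foldr_none (g : I → X → Option X) (w : List I) :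
    List.foldr (fun i o => o.bind (g i)) none w = none := by
  induction w with
  | nil => rfl
  | cons i w ih => simp [List.foldr, ih]

lemma chainOpt_append' (g : I → X → Option X) (a b : List I) (x : X) :
    chainOpt g (a ++ b) x = (chainOpt g b x).bind (fun y => chainOpt g a y) := by
  unfold chainOpt
  rw [List.foldr_append]
  cases h : List.foldr (fun i o => o.bind (g i)) (some x) b with
  | none => simp [chainOpt_foldr_none]
  | some y => simp

lemma chainOpt_singleton' (g : I → X → Option X) (i : I) (x : X) :
    chainOpt g [i] x = g i x := by
  simp [chainOpt]

lemma e_to_f (G : GoodGraph I X) (u : List I) (x z : X)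
    (h : chainOpt G.e u x = some z) : chainOpt G.f u.reverse z = some x := by
  induction u generalizing z with
  | nil =>
    simp only [chainOpt, List.foldr] at h
    simpa [chainOpt] using congrArg some (Option.some.inj h).symm
  | cons i a ih =>
    rw [chainOpt_cons'] at h
    obtain ⟨m, hm, him⟩ := Option.bind_eq_some_iff.mp h
    have hf : G.f i z = some m := (G.ef i z m).mp him
    have hrec := ih m hm
    simp only [List.reverse_cons]
    rw [chainOpt_append', chainOpt_singleton', hf]
    simpa using hrec

lemma no_cycle (G : GoodGraph I X) (x0 : X) (hno : ∀ i, G.e i x0 = none)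
    (w : List I) (h : chainOpt G.f w x0 = some x0) : w = [] := by
  cases w with
  | nil => rfl
  | cons i t =>
    rw [chainOpt_cons'] at h
    obtain ⟨y, _, hy⟩ := Option.bind_eq_some_iff.mp h
    have he : G.e i x0 = some y := (G.ef i y x0).mpr hy
    rw [hno i] at he
    exact absurd he (by simp)

lemma getLast?_decomp {l : List I} {a : I} (h : l.getLast? = some a) :
    ∃ l', l = l' ++ [a] := by
  induction l with
  | nil => simp at h
  | cons b t ih =>
    cases t with
    | nil =>
      simp [List.getLast?] at h
      exact ⟨[], by simp [h]⟩
    | cons c s =>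
      rw [List.getLast?_cons_cons] at h
      obtain ⟨l', hl'⟩ := ih h
      exact ⟨b :: l', by simp [hl']⟩

end AuxStmt15

theorem stmt_15 {I X : Type} [Fintype I] [DecidableEq I]
    (G : GoodGraph I X) (x0 : X) (hmax : IsMaxElem G x0) (hconf : HLC G) :
    ∀ (x : X) (w w' : List I), chainOpt G.f w x0 = some x →
      chainOpt G.f w' x0 = some x → (w : Multiset I) = (w' : Multiset I) := by
  obtain ⟨hno, hreach⟩ := hmax
  suffices H : ∀ n (w : List I), w.length = n → ∀ (x : X) (w' : List I),
      chainOpt G.f w x0 = some x → chainOpt G.f w' x0 = some x →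
      (w : Multiset I) = (w' : Multiset I) by
    intro x w w' h h'
    exact H w.length w rfl x w' h h'
  intro n
  induction n using Nat.strong_induction_on with
  | _ n IH =>
  intro w hlen x w' hw hw'
  match w, w' with
  | [], w' =>
    have hx : x0 = x := by
      simpa [chainOpt] using hw
    subst hx
    have := no_cycle G x0 hno w' hw'
    subst this
    rfl
  | (i :: t), [] =>
    have hx : x0 = x := by
      simpa [chainOpt] using hw'
    subst hx
    have := no_cycle G x0 hno (i :: t) hw
    simp at this
  | (i :: t), (j :: t') =>
    rw [chainOpt_cons'] at hw hw'
    obtain ⟨y, hty, hfy⟩ := Option.bind_eq_some_iff.mp hw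
    obtain ⟨y', hty', hfy'⟩ := Option.bind_eq_some_iff.mp hw'
    have eix : G.e i x = some y := (G.ef i y x).mpr hfy
    have ejx : G.e j x = some y' := (G.ef j y' x).mpr hfy'
    have hn : n = t.length + 1 := by simpa using hlen.symm
    by_cases hij : i = j
    · subst hij
      have hyy : y = y' := by
        rw [eix] at ejx
        exact Option.some.inj ejx
      subst hyy
      have := IH t.length (by omega) t rfl y t' hty hty'
      simpa using this
    · obtain ⟨u, u', z, hl2, hmu, hlu, hlu', hcu, hcu'⟩ :=
        hconf x i j hij (by simp [eix]) (by simp [ejx])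
      obtain ⟨u₁, rfl⟩ := getLast?_decomp hlu
      obtain ⟨u₁', rfl⟩ := getLast?_decomp hlu'
      rw [chainOpt_append', chainOpt_singleton', eix] at hcu
      rw [chainOpt_append', chainOpt_singleton', ejx] at hcu'
      simp only [Option.bind_some] at hcu hcu'
      have hy2 : chainOpt G.f u₁.reverse z = some y := e_to_f G u₁ y z hcu
      have hy2' : chainOpt G.f u₁'.reverse z = some y' := e_to_f G u₁' y' z hcu'
      obtain ⟨v, hv⟩ := hreach z
      have hcomp : chainOpt G.f (u₁.reverse ++ v) x0 = some y := by
        rw [chainOpt_append', hv]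
        simpa using hy2
      have hcomp' : chainOpt G.f (u₁'.reverse ++ v) x0 = some y' := by
        rw [chainOpt_append', hv]
        simpa using hy2'
      have h1 : (↑t : Multiset I) = (↑(u₁.reverse ++ v) : Multiset I) :=
        IH t.length (by omega) t rfl y (u₁.reverse ++ v) hty hcomp
      have hlen1 : t.length = u₁.length + v.length := by
        have := congrArg Multiset.card h1
        simpa using this
      have hlenu : u₁'.length = u₁.length := by
        have := congrArg Multiset.card hmu
        simpa using this.symm
      have h2 : (↑(u₁'.reverse ++ v) : Multiset I) = (↑t' : Multiset I) :=
        IH (u₁'.reverse ++ v).length (by simp [hlenu]; omega) _ rfl y' t' hcomp' hty'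
      have key : (↑u₁ : Multiset I) + {i} = (↑u₁' : Multiset I) + {j} := by
        simpa [← Multiset.coe_add] using hmu
      have h1' : (↑t : Multiset I) = ↑u₁ + ↑v := by
        simpa [← Multiset.coe_add] using h1
      have h2' : (↑t' : Multiset I) = ↑u₁' + ↑v := by
        simpa [← Multiset.coe_add] using h2.symm
      show (↑(i :: t) : Multiset I) = (↑(j :: t') : Multiset I)
      rw [← Multiset.cons_coe, ← Multiset.cons_coe, ← Multiset.singleton_add,
        ← Multiset.singleton_add, h1', h2']
      calc ({i} : Multiset I) + (↑u₁ + ↑v) = (↑u₁ + {i}) + ↑v := by abel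
        _ = (↑u₁' + {j}) + ↑v := by rw [key]
        _ = {j} + (↑u₁' + ↑v) := by abel
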